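/- Let φ: A* → A* be non-erasing with alph(φ^n(a)) = alph(φ(a)) for every a ∈ A and n ≥ 1, let A' be a leaf of the tree of invariant subalphabets of φ, let g ∈ A' be an unbounded letter, and let G' = (A', φ|_{A'}, g). If G' is not pushy, then the language L_{G'} is uniformly recurrent. -/
import Mathlib


/-- The extension of the morphism given by `φ` on letters to a morphism on words. -/
def extM {A B : Type*} (φ : A → List B) (w : List A) : List B := w.flatMap φ

/-- The `k`-th power `u^k` of a word `u`. -/
def wpow {A : Type*} (u : List A) (k : ℕ) : List A := (List.replicate k u).flatten

/-- A word `v` is primitive if `v = u^k` implies `k = 1`. -/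
def Primitive {A : Type*} (v : List A) : Prop :=
  v ≠ [] ∧ ∀ (u : List A) (k : ℕ), v = wpow u k → k = 1

/-- The language of the D0L-system `(A, φ, w)`: all factors of the words `φ^n(w)`. -/
def LangD0L {A : Type*} (φ : A → List A) (w : List A) : Set (List A) :=
  {v | ∃ n : ℕ, v <:+: (extM φ)^[n] w}

/-- `fact(Ψ(L))`: all factors of `Ψ`-images of elements of `L`. -/
def factImg {A B : Type*} (Ψ : A → List B) (L : Set (List A)) : Set (List B) :=
  {v | ∃ u ∈ L, v <:+: extM Ψ u}

/-- The language of the HD0L-system `(A, φ, w, Ψ)`. -/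
def LangHD0L {A B : Type*} (φ : A → List A) (w : List A) (Ψ : A → List B) : Set (List B) :=
  factImg Ψ (LangD0L φ w)

/-- A morphism is non-erasing if no letter is mapped to the empty word. -/
def NonErasing {A B : Type*} (φ : A → List B) : Prop := ∀ a, φ a ≠ []

/-- A letter `b` is bounded (w.r.t. `φ`) if the lengths `|φ^n(b)|` are bounded. -/
def BddLetter {A : Type*} (φ : A → List A) (b : A) : Prop :=
  ∃ C : ℕ, ∀ n : ℕ, ((extM φ)^[n] [b]).length ≤ C

/-- The set of letters occurring in a word. -/
def alph {A : Type*} (u : List A) : Set A := {a | a ∈ u}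

/-- `alph(φ(S))` for a set of letters `S`: letters occurring in `φ(b)` for some `b ∈ S`. -/
def alphIm {A : Type*} (φ : A → List A) (S : Set A) : Set A := ⋃ b ∈ S, alph (φ b)

/-- A D0L-system is pushy if its language contains infinitely many words over bounded letters. -/
def Pushy {A : Type*} (φ : A → List A) (w : List A) : Prop :=
  {v ∈ LangD0L φ w | ∀ a ∈ v, BddLetter φ a}.Infinite

/-- A factorial language `L` is uniformly recurrent: for every `n` there is `K` such that
every element of `L` of length `K` contains every element of `L` of length `n` as a factor. -/
def UnifRec {A : Type*} (L : Set (List A)) : Prop :=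
  ∀ n : ℕ, ∃ K : ℕ, ∀ u ∈ L, u.length = K → ∀ v ∈ L, v.length = n → v <:+: u

/-- Vertices of the tree of invariant subalphabets of `φ`: nonempty sets `S` with
`alph(φ(S)) = S` containing an unbounded letter `a` with `alph(φ(a)) = S`. -/
def IsVertex {A : Type*} (φ : A → List A) (S : Set A) : Prop :=
  S.Nonempty ∧ alphIm φ S = S ∧ ∃ a ∈ S, ¬ BddLetter φ a ∧ alph (φ a) = S

/-- Leaves of the tree of invariant subalphabets: minimal vertices w.r.t. inclusion. -/
def IsLeaf {A : Type*} (φ : A → List A) (S : Set A) : Prop :=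
  IsVertex φ S ∧ ∀ T, IsVertex φ T → T ⊆ S → T = S

/-- Two words are conjugate: `u = xy` and `v = yx`. -/
def Conj {A : Type*} (u v : List A) : Prop := ∃ x y : List A, u = x ++ y ∧ v = y ++ x

/-- The prefix of length `n` of an infinite word. -/
def prefW {A : Type*} (w : ℕ → A) (n : ℕ) : List A := (List.range n).map w


section Stmt13Aux
variable {A : Type*}

private lemma extM_append' (φ : A → List A) (x y : List A) :
    extM φ (x ++ y) = extM φ x ++ extM φ y := List.flatMap_append ..

private lemma extM_singleton' (φ : A → List A) (a : A) : extM φ [a] = φ a := by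
  simp [extM]

private lemma iter_append' (φ : A → List A) (m : ℕ) (x y : List A) :
    (extM φ)^[m] (x ++ y) = (extM φ)^[m] x ++ (extM φ)^[m] y := by
  induction m generalizing x y with
  | zero => simp
  | succ m ih =>
      simp only [Function.iterate_succ_apply]
      rw [extM_append', ih]

private lemma iter_nil' (φ : A → List A) (m : ℕ) : (extM φ)^[m] [] = [] := by
  induction m with
  | zero => rfl
  | succ m ih => simp only [Function.iterate_succ_apply]; simpa [extM]

private lemma iter_flatMap' (φ : A → List A) (m : ℕ) (w : List A) :
    (extM φ)^[m] w = w.flatMap (fun a => (extM φ)^[m] [a]) := by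
  induction w with
  | nil => simp [iter_nil']
  | cons a t ih =>
      have h : a :: t = [a] ++ t := rfl
      rw [h, iter_append', List.flatMap_append, ← ih]
      simp

private lemma iter_infix_mono' (φ : A → List A) (m : ℕ) {u w : List A} (h : u <:+: w) :
    (extM φ)^[m] u <:+: (extM φ)^[m] w := by
  obtain ⟨s, t, rfl⟩ := h
  rw [iter_append', iter_append']
  exact ⟨_, _, rfl⟩

private lemma len_flatMap_le' (ψ : A → List A) (c : ℕ) (h : ∀ a, (ψ a).length ≤ c)
    (w : List A) : (w.flatMap ψ).length ≤ c * w.length := by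
  induction w with
  | nil => simp
  | cons a t ih =>
      have ha := h a
      simp only [List.flatMap_cons, List.length_append, List.length_cons, Nat.mul_succ]
      omega

private lemma len_iter_le' (φ : A → List A) (c : ℕ) (h : ∀ a, (φ a).length ≤ c) (m : ℕ)
    (w : List A) : ((extM φ)^[m] w).length ≤ c ^ m * w.length := by
  induction m generalizing w with
  | zero => simp
  | succ m ih =>
      rw [Function.iterate_succ_apply]
      calc ((extM φ)^[m] (extM φ w)).length ≤ c ^ m * (extM φ w).length := ih _
        _ ≤ c ^ m * (c * w.length) := Nat.mul_le_mul_left _ (len_flatMap_le' φ c h w)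
        _ = c ^ (m + 1) * w.length := by ring

private lemma coverPrefix' (ψ : A → List A) (c : ℕ) (hc : ∀ a, (ψ a).length ≤ c) :
    ∀ (w u : List A), u <+: w.flatMap ψ →
      ∃ z s, z <+: w ∧ u = z.flatMap ψ ++ s ∧ s.length ≤ c := by
  intro w
  induction w with
  | nil =>
      intro u hu
      simp only [List.flatMap_nil, List.prefix_nil] at hu
      exact ⟨[], [], List.nil_prefix, by simp [hu], by simp⟩
  | cons b w' ih =>
      intro u hu
      obtain ⟨t, ht⟩ := hu
      rw [List.flatMap_cons] at ht
      rcases List.append_eq_append_iff.mp ht with ⟨q, hq1, _⟩ | ⟨q, hq1, hq2⟩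
      · refine ⟨[], u, List.nil_prefix, by simp, ?_⟩
        calc u.length ≤ (ψ b).length := by
              have := congrArg List.length hq1; simp at this; omega
          _ ≤ c := hc b
      · obtain ⟨z, s, hz, he, hs⟩ := ih q ⟨t, hq2.symm⟩
        exact ⟨b :: z, s, List.cons_prefix_cons.mpr ⟨rfl, hz⟩,
          by rw [hq1, he, List.flatMap_cons, List.append_assoc], hs⟩

private lemma coverInfix' (ψ : A → List A) (c : ℕ) (hc : ∀ a, (ψ a).length ≤ c) :
    ∀ (w u : List A), u <:+: w.flatMap ψ →
      ∃ z p s, z <:+: w ∧ u = p ++ z.flatMap ψ ++ s ∧ p.length ≤ c ∧ s.length ≤ c := by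
  intro w
  induction w with
  | nil =>
      intro u hu
      simp only [List.flatMap_nil] at hu
      rw [List.infix_nil] at hu
      exact ⟨[], [], [], List.nil_infix, by simp [hu], by simp, by simp⟩
  | cons b w' ih =>
      intro u hu
      obtain ⟨s0, t0, ht⟩ := hu
      rw [List.flatMap_cons] at ht
      rw [List.append_assoc] at ht
      rcases List.append_eq_append_iff.mp ht with ⟨q, hq1, hq2⟩ | ⟨q, hq1, hq2⟩
      · rcases List.append_eq_append_iff.mp hq2 with ⟨r, hr1, hr2⟩ | ⟨r, hr1, hr2⟩
        · refine ⟨[], u, [], List.nil_infix, by simp, ?_, by simp⟩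
          have h1 := congrArg List.length hq1
          have h2 := congrArg List.length hr1
          have := hc b
          simp at h1 h2
          omega
        · obtain ⟨z, s, hz, he, hs⟩ := coverPrefix' ψ c hc w' r ⟨t0, hr2.symm⟩
          refine ⟨z, q, s, hz.isInfix.trans (List.infix_cons (List.infix_refl _)), ?_, ?_, hs⟩
          · rw [hr1, he, List.append_assoc]
          · have h1 := congrArg List.length hq1
            have := hc b
            simp at h1
            omega
      · obtain ⟨z, p, s, hz, he, hp, hs⟩ :=
          ih u ⟨q, t0, by rw [List.append_assoc]; exact hq2.symm⟩
        exact ⟨z, p, s, List.infix_cons hz, he, hp, hs⟩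

private lemma mem_alphIm' {φ : A → List A} {S : Set A} {x : A} :
    x ∈ alphIm φ S ↔ ∃ b ∈ S, x ∈ φ b := by
  simp [alphIm, alph]

private lemma alph_extM' (φ : A → List A) (u : List A) :
    alph (extM φ u) = alphIm φ (alph u) := by
  ext x
  simp only [alph, Set.mem_setOf_eq, mem_alphIm', extM, List.mem_flatMap]

private lemma bdd_list' (φ : A → List A) :
    ∀ u : List A, (∀ a ∈ u, BddLetter φ a) → ∃ C, ∀ n, ((extM φ)^[n] u).length ≤ C := by
  intro u
  induction u with
  | nil => exact fun _ => ⟨0, fun n => by simp [iter_nil']⟩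
  | cons a t ih =>
      intro h
      obtain ⟨Ca, hCa⟩ := h a (by simp)
      obtain ⟨Ct, hCt⟩ := ih fun b hb => h b (by simp [hb])
      refine ⟨Ca + Ct, fun n => ?_⟩
      have h1 : (a :: t) = [a] ++ t := rfl
      rw [h1, iter_append', List.length_append]
      exact Nat.add_le_add (hCa n) (hCt n)

private lemma unbounded_child' (φ : A → List A) {a : A} (ha : ¬ BddLetter φ a) :
    ∃ b ∈ φ a, ¬ BddLetter φ b := by
  by_contra h
  push_neg at h
  obtain ⟨C, hC⟩ := bdd_list' φ (φ a) h
  refine ha ⟨C + 1, fun n => ?_⟩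
  cases n with
  | zero => simp
  | succ n =>
      rw [Function.iterate_succ_apply, extM_singleton']
      exact (hC n).trans (Nat.le_succ C)

private lemma exists_vertex' [Fintype A] (φ : A → List A)
    (hstar : ∀ (a : A) (n : ℕ), 1 ≤ n → alph ((extM φ)^[n] [a]) = alph (φ a))
    {a : A} (ha : ¬ BddLetter φ a) :
    ∃ S, IsVertex φ S ∧ S ⊆ alph (φ a) := by
  set T : Set A := {b | ¬ BddLetter φ b ∧ alph (φ b) ⊆ alph (φ a)} with hT
  have haT : a ∈ T := ⟨ha, subset_rfl⟩
  set N : Set ℕ := (fun b => (alph (φ b)).ncard) '' T with hN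
  have hNne : N.Nonempty := ⟨_, a, haT, rfl⟩
  obtain ⟨b, hbT, hbmin⟩ : ∃ b ∈ T, ∀ b' ∈ T, (alph (φ b)).ncard ≤ (alph (φ b')).ncard := by
    obtain ⟨b, hbT, hb⟩ := Nat.sInf_mem hNne
    have hb2 : (alph (φ b)).ncard = sInf N := hb
    exact ⟨b, hbT, fun b' hb' => le_of_eq_of_le hb2 (Nat.sInf_le ⟨b', hb', rfl⟩)⟩
  set S := alph (φ b) with hS
  have hinv : alphIm φ S = S := by
    have h2 := hstar b 2 (by norm_num)
    have h3 : (extM φ)^[2] [b] = extM φ (φ b) := by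
      rw [show (2:ℕ) = 1 + 1 from rfl, Function.iterate_add_apply]
      simp [extM_singleton']
    rw [h3, alph_extM'] at h2
    exact h2
  obtain ⟨b', hb'mem, hb'u⟩ := unbounded_child' φ hbT.1
  have hb'S : b' ∈ S := hb'mem
  have hsub : alph (φ b') ⊆ S := by
    rw [← hinv]
    exact fun x hx => mem_alphIm'.mpr ⟨b', hb'S, hx⟩
  have hb'T : b' ∈ T := ⟨hb'u, hsub.trans hbT.2⟩
  have heq : alph (φ b') = S :=
    Set.eq_of_subset_of_ncard_le hsub (hbmin b' hb'T) (Set.toFinite _)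
  exact ⟨S, ⟨⟨b', hb'S⟩, hinv, b', hb'S, hb'u, heq⟩, hbT.2⟩

end Stmt13Aux

/-- Under Assumption ∗, for a leaf `A'`, an unbounded `g ∈ A'` and
`G' = (A', φ|_{A'}, g)` not pushy, the language `L_{G'}` is uniformly recurrent. -/
theorem stmt13 {A : Type*} [Fintype A] (φ : A → List A) (hφ : NonErasing φ)
    (hstar : ∀ (a : A) (n : ℕ), 1 ≤ n → alph ((extM φ)^[n] [a]) = alph (φ a))
    (A' : Set A) (hA' : IsLeaf φ A')
    (g : A) (hg : g ∈ A') (hgu : ¬ BddLetter φ g)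
    (hnp : ¬ Pushy φ [g]) :
    UnifRec (LangD0L φ [g]) := by
  classical
  -- basic setup
  have hAinv : alphIm φ A' = A' := hA'.1.2.1
  have alph_eq : ∀ b ∈ A', ¬ BddLetter φ b → alph (φ b) = A' := by
    intro b hb hbu
    have hsub : alph (φ b) ⊆ A' := by
      rw [← hAinv]; exact fun x hx => mem_alphIm'.mpr ⟨b, hb, hx⟩
    obtain ⟨S, hSv, hSsub⟩ := exists_vertex' φ hstar hbu
    have hSA : S = A' := hA'.2 S hSv (hSsub.trans hsub)
    exact hsub.antisymm (hSA ▸ hSsub)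
  have hgA : alph (φ g) = A' := alph_eq g hg hgu
  have hginfix : [g] <:+: φ g := by
    have : g ∈ φ g := by
      have : g ∈ alph (φ g) := hgA ▸ hg
      exact this
    obtain ⟨s, t, h⟩ := List.append_of_mem this
    exact ⟨s, t, by simp [h]⟩
  have hstep : ∀ N : ℕ, (extM φ)^[N] [g] <:+: (extM φ)^[N + 1] [g] := by
    intro N
    rw [Function.iterate_succ_apply, extM_singleton']
    exact iter_infix_mono' φ N hginfix
  have occ_mono : ∀ (v : List A) (N M : ℕ), v <:+: (extM φ)^[N] [g] → N ≤ M →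
      v <:+: (extM φ)^[M] [g] := by
    intro v N M hv hNM
    induction M, hNM using Nat.le_induction with
    | base => exact hv
    | succ M hNM ih => exact ih.trans (hstep M)
  -- bound on bounded-letter factors
  have hfin : {v ∈ LangD0L φ [g] | ∀ a ∈ v, BddLetter φ a}.Finite := Set.not_infinite.mp hnp
  obtain ⟨D, hD⟩ := (hfin.image List.length).bddAbove
  have hDle : ∀ v ∈ LangD0L φ [g], (∀ a ∈ v, BddLetter φ a) → v.length ≤ D :=
    fun v hv hva => hD ⟨v, ⟨hv, hva⟩, rfl⟩
  -- the growth constant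
  set c : ℕ := Finset.univ.sup (fun a : A => (φ a).length) with hcdef
  have hc : ∀ a : A, (φ a).length ≤ c := fun a => by rw [hcdef]; exact Finset.le_sup (f := fun a : A => (φ a).length) (Finset.mem_univ a)
  have hc2 : 2 ≤ c := by
    by_contra h
    push_neg at h
    refine hgu ⟨1, fun n => ?_⟩
    have := len_iter_le' φ c hc n [g]
    have hpow : c ^ n ≤ 1 := by
      calc c ^ n ≤ 1 ^ n := Nat.pow_le_pow_left (by omega) n
        _ = 1 := one_pow n
    simpa using this.trans (by simpa using Nat.mul_le_mul_right ([g] : List A).length hpow)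
  intro n
  -- uniform occurrence level for length-n factors
  have hFfin : {v : List A | v ∈ LangD0L φ [g] ∧ v.length = n}.Finite :=
    (List.finite_length_eq A n).subset (fun v hv => hv.2)
  set f : List A → ℕ := fun v =>
    if h : ∃ N, v <:+: (extM φ)^[N] [g] then Nat.find h else 0 with hfdef
  obtain ⟨m0, hm0⟩ := (hFfin.image f).bddAbove
  have hocc : ∀ v ∈ LangD0L φ [g], v.length = n → v <:+: (extM φ)^[m0] [g] := by
    intro v hv hvn
    have hex : ∃ N, v <:+: (extM φ)^[N] [g] := hv
    have hfv : f v = Nat.find hex := by simp [hfdef, dif_pos hex]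
    have hle : f v ≤ m0 := hm0 ⟨v, ⟨hv, hvn⟩, rfl⟩
    exact occ_mono v (Nat.find hex) m0 (Nat.find_spec hex) (hfv ▸ hle)
  set m : ℕ := m0 + 1 with hmdef
  set ψ : A → List A := fun a => (extM φ)^[m] [a] with hψdef
  have hψle : ∀ a, (ψ a).length ≤ c ^ m := by
    intro a
    simpa using len_iter_le' φ c hc m [a]
  have hcm1 : 1 ≤ c ^ m := Nat.one_le_pow _ _ (by omega)
  refine ⟨(D + 3) * c ^ m, ?_⟩
  intro u hu hlen v hv hvn
  obtain ⟨M, huM⟩ := hu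
  have hKle : (D + 3) * c ^ m ≤ ((extM φ)^[M] [g]).length := hlen ▸ huM.length_le
  have hiterlen : ((extM φ)^[M] [g]).length ≤ c ^ M := by
    simpa using len_iter_le' φ c hc M [g]
  have hmM : m < M := by
    have h1 : c ^ m < c ^ M := by
      have h2 : 2 * c ^ m ≤ (D + 3) * c ^ m := Nat.mul_le_mul_right _ (by omega)
      omega
    exact (Nat.pow_lt_pow_iff_right (by omega : 1 < c)).mp h1
  set M' : ℕ := M - m with hM'def
  have hM'1 : 1 ≤ M' := by omega
  have hsplit : (extM φ)^[M] [g] = ((extM φ)^[M'] [g]).flatMap ψ := by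
    rw [show M = m + M' by omega, Function.iterate_add_apply]
    exact iter_flatMap' φ m _
  obtain ⟨z, p, s, hzw, hue, hp, hs⟩ := coverInfix' ψ (c ^ m) hψle _ u (hsplit ▸ huM)
  have hzlen : D + 1 ≤ z.length := by
    have h1 : (z.flatMap ψ).length ≤ c ^ m * z.length := len_flatMap_le' ψ (c ^ m) hψle z
    have h2 := congrArg List.length hue
    simp only [List.length_append] at h2
    have h3 : (D + 3) * c ^ m ≤ c ^ m * z.length + 2 * c ^ m := by omega
    have h4 : (D + 3) * c ^ m ≤ (z.length + 2) * c ^ m := by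
      calc (D + 3) * c ^ m ≤ c ^ m * z.length + 2 * c ^ m := h3
        _ = (z.length + 2) * c ^ m := by ring
    have h5 : D + 3 ≤ z.length + 2 := Nat.le_of_mul_le_mul_right h4 (by omega)
    omega
  have hzL : z ∈ LangD0L φ [g] := ⟨M', hzw⟩
  obtain ⟨a, haz, hau⟩ : ∃ a ∈ z, ¬ BddLetter φ a := by
    by_contra h
    push_neg at h
    have := hDle z hzL h
    omega
  have haA : a ∈ A' := by
    have hmem : a ∈ alph ((extM φ)^[M'] [g]) := hzw.subset haz
    rw [hstar g M' hM'1, hgA] at hmem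
    exact hmem
  have haφ : alph (φ a) = A' := alph_eq a haA hau
  have hgina : [g] <:+: φ a := by
    have : g ∈ φ a := by
      have : g ∈ alph (φ a) := haφ ▸ hg
      exact this
    obtain ⟨s1, t1, h⟩ := List.append_of_mem this
    exact ⟨s1, t1, by simp [h]⟩
  have h3 : v <:+: (extM φ)^[m0] [g] := hocc v hv hvn
  have h4 : (extM φ)^[m0] [g] <:+: ψ a := by
    show _ <:+: (extM φ)^[m0 + 1] [a]
    rw [Function.iterate_succ_apply, extM_singleton']
    exact iter_infix_mono' φ m0 hgina
  have h5 : ψ a <:+: z.flatMap ψ := by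
    obtain ⟨s1, t1, rfl⟩ := List.append_of_mem haz
    rw [List.flatMap_append, List.flatMap_cons]
    exact ⟨s1.flatMap ψ, t1.flatMap ψ, by rw [List.append_assoc]⟩
  have h6 : z.flatMap ψ <:+: u := ⟨p, s, hue.symm⟩
  exact ((h3.trans h4).trans h5).trans h6
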